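/- Let m ≥ 1 and let Q be an m × m real row-stochastic matrix indexed by {0,1,…,m−1} with Q_{k,0} > 0 for every k, let L₀,…,L_{m−1} be real numbers, and let π be a stationary distribution of Q (π nonnegative, Σ_k π_k = 1, πQ = π). If x = (x₁,…,x_{m−1}) ∈ ℝ^{m−1} and y ∈ ℝ satisfy L₀ + Σ_{j=1}^{m−1} Q_{0,j}·x_j = y and L_k + Σ_{j=1}^{m−1} Q_{k,j}·x_j − x_k = y for all k ∈ {1,…,m−1}, then y = Σ_{k=0}^{m−1} π_k·L_k. -/

import Mathlib

/-- If `(x, y)` is a multi-typed intersection point of the hyperplanes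
of a row-stochastic matrix `Q` (with `Q k 0 > 0` for all `k`) with costs `L k`,
and `pr` is a stationary distribution of `Q`, then the height `y` equals the gain
`∑ k, pr k * L k`.  (`m ≥ 1` is encoded by using `m + 1` states.) -/
theorem stmt_4 (m : ℕ) (Q : Fin (m + 1) → Fin (m + 1) → ℝ)
    (hQ : ∀ k j, 0 ≤ Q k j) (hQrow : ∀ k, ∑ j, Q k j = 1)
    (hQ0 : ∀ k, 0 < Q k 0) (L : Fin (m + 1) → ℝ)
    (pr : Fin (m + 1) → ℝ) (hpr : ∀ k, 0 ≤ pr k) (hprsum : ∑ k, pr k = 1)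
    (hstat : ∀ j, ∑ k, pr k * Q k j = pr j)
    (x : Fin (m + 1) → ℝ) (y : ℝ)
    (h0 : L 0 + ∑ j ∈ Finset.univ.erase 0, Q 0 j * x j = y)
    (hk : ∀ k : Fin (m + 1), k ≠ 0 →
      L k + (∑ j ∈ Finset.univ.erase 0, Q k j * x j) - x k = y) :
    y = ∑ k, pr k * L k := by
  set x' : Fin (m + 1) → ℝ := fun k => if k = 0 then 0 else x k with hx'
  have hsum : ∀ k, ∑ j ∈ Finset.univ.erase 0, Q k j * x j = ∑ j, Q k j * x' j := by
    intro k
    rw [← Finset.add_sum_erase _ _ (Finset.mem_univ (0 : Fin (m + 1)))]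
    simp only [hx', if_pos rfl, mul_zero, zero_add]
    exact Finset.sum_congr rfl fun j hj => by
      rw [if_neg (Finset.ne_of_mem_erase hj)]
  have key : ∀ k, L k + (∑ j, Q k j * x' j) - x' k = y := by
    intro k
    by_cases hk0 : k = 0
    · subst hk0
      simp only [hx', if_pos rfl, sub_zero, ← hsum]
      have h0' := h0
      rw [hsum 0] at h0'
      simpa only [hx'] using h0'
    · have := hk k hk0
      rw [hsum] at this
      simpa only [hx', if_neg hk0] using this
  have hy : ∑ k, pr k * (L k + (∑ j, Q k j * x' j) - x' k) = y := by
    calc ∑ k, pr k * (L k + (∑ j, Q k j * x' j) - x' k)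
        = ∑ k, pr k * y := by
          exact Finset.sum_congr rfl fun k _ => by rw [key k]
      _ = (∑ k, pr k) * y := by rw [Finset.sum_mul]
      _ = y := by rw [hprsum, one_mul]
  have expand : ∑ k, pr k * (L k + (∑ j, Q k j * x' j) - x' k)
      = (∑ k, pr k * L k) + (∑ k, pr k * ∑ j, Q k j * x' j) - ∑ k, pr k * x' k := by
    simp only [mul_sub, mul_add, Finset.sum_sub_distrib, Finset.sum_add_distrib]
  have swap : (∑ k, pr k * ∑ j, Q k j * x' j) = ∑ k, pr k * x' k := by
    calc ∑ k, pr k * ∑ j, Q k j * x' j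
        = ∑ k, ∑ j, pr k * Q k j * x' j := by
          exact Finset.sum_congr rfl fun k _ => by
            rw [Finset.mul_sum]; exact Finset.sum_congr rfl fun j _ => by ring
      _ = ∑ j, ∑ k, pr k * Q k j * x' j := Finset.sum_comm
      _ = ∑ j, (∑ k, pr k * Q k j) * x' j := by
          exact Finset.sum_congr rfl fun j _ => by rw [Finset.sum_mul]
      _ = ∑ j, pr j * x' j := by
          exact Finset.sum_congr rfl fun j _ => by rw [hstat]
  rw [expand, swap] at hy
  linarith [hy]
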